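/- Let K be a field with char K ≠ 2 and let q be a quadratic form on K⁴ whose polar bilinear form is nondegenerate and which is isotropic, i.e. q(v) = 0 for some nonzero v ∈ K⁴. Then there exist c, μ ∈ Kˣ such that q is equivalent (isometric) to the quadratic form (x₀,x₁,x₂,x₃) ↦ c·(x₀² − x₁x₂ − μ·x₃²) on K⁴. -/

import Mathlib

/-- Every nondegenerate isotropic quadratic form on `K⁴` (char K ≠ 2) is
equivalent to `c·(x₀² − x₁x₂ − μx₃²)` for some `c, μ ∈ Kˣ`. -/
theorem stmt_0 (K : Type*) [Field K] (hchar : ringChar K ≠ 2)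
    (q : QuadraticForm K (Fin 4 → K))
    (hnd : LinearMap.BilinForm.Nondegenerate (QuadraticMap.polarBilin q))
    (hiso : ∃ v : Fin 4 → K, v ≠ 0 ∧ q v = 0) :
    ∃ (c μ : Kˣ) (e : (Fin 4 → K) ≃ₗ[K] (Fin 4 → K)),
      ∀ v : Fin 4 → K,
        q (e v) = (c : K) * (v 0 ^ 2 - v 1 * v 2 - (μ : K) * v 3 ^ 2) := by
  classical
  obtain ⟨v, hv0, hqv⟩ := hiso
  set B : LinearMap.BilinForm K (Fin 4 → K) := QuadraticMap.polarBilin q with hB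
  have two_ne : (2 : K) ≠ 0 := Ring.two_ne_zero hchar
  have hadd : ∀ x y : Fin 4 → K, q (x + y) = q x + q y + B x y := by
    intro x y
    simp [hB, QuadraticMap.polarBilin_apply_apply, QuadraticMap.polar]
  have hsymm : ∀ x y : Fin 4 → K, B x y = B y x := by
    intro x y
    simp [hB, QuadraticMap.polarBilin_apply_apply, QuadraticMap.polar_comm]
  have hself : ∀ x : Fin 4 → K, B x x = 2 * q x := by
    intro x
    simp [hB, QuadraticMap.polarBilin_apply_apply, QuadraticMap.polar_self]
  have hqsmul : ∀ (a : K) (x : Fin 4 → K), q (a • x) = a * a * q x := by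
    intro a x; rw [QuadraticMap.map_smul]; simp [smul_eq_mul]
  -- get w with B v w = 1
  have hex : ∃ w0, B v w0 ≠ 0 := by
    by_contra hc
    push_neg at hc
    exact hv0 (hnd.1 v hc)
  obtain ⟨w0, hw0⟩ := hex
  set w : Fin 4 → K := (B v w0)⁻¹ • w0 with hw
  have hBvw : B v w = 1 := by
    simp [hw, map_smul, smul_eq_mul]
    field_simp
  -- hyperbolic partner
  set w' : Fin 4 → K := w - q w • v with hw'
  have hBvv : B v v = 0 := by rw [hself, hqv]; ring
  have hBvw' : B v w' = 1 := by
    simp [hw', map_sub, map_smul, smul_eq_mul, hBvw, hBvv]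
  have hqw' : q w' = 0 := by
    have h1 : q (w + (-(q w)) • v) = q w + q ((-(q w)) • v) + B w ((-(q w)) • v) := hadd _ _
    have h2 : w' = w + (-(q w)) • v := by rw [hw']; module
    have h3 : q ((-(q w)) • v) = 0 := by rw [hqsmul, hqv]; ring
    have h4 : B w ((-(q w)) • v) = -(q w) := by
      rw [map_smul, smul_eq_mul, hsymm w v, hBvw]; ring
    rw [h2, h1, h3, h4]; ring
  have hBw'w' : B w' w' = 0 := by rw [hself, hqw']; ring
  -- the projection π onto the orthogonal complement of span{v,w'}
  set π : (Fin 4 → K) → (Fin 4 → K) := fun x => x - B w' x • v - B v x • w' with hπ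
  have hπadd : ∀ x y, π (x + y) = π x + π y := by
    intro x y; simp only [hπ, map_add]; module
  have hBvπ : ∀ x, B v (π x) = 0 := by
    intro x
    simp [hπ, map_sub, map_smul, smul_eq_mul, hBvv, hBvw']
  have hBw'π : ∀ x, B w' (π x) = 0 := by
    intro x
    simp [hπ, map_sub, map_smul, smul_eq_mul, hBw'w', hsymm w' v, hBvw']
  have hdecomp : ∀ x : Fin 4 → K, x = B w' x • v + B v x • w' + π x := by
    intro x; simp only [hπ]; module
  -- find e₂ in the complement with q e₂ ≠ 0
  have hex2 : ∃ x, q (π x) ≠ 0 := by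
    by_contra hc
    push_neg at hc
    have hπ0 : ∀ x, π x = 0 := by
      intro x
      apply hnd.1
      intro z
      have hBππ : ∀ y, B (π x) (π y) = 0 := by
        intro y
        have := hadd (π x) (π y)
        rw [hc x, hc y, ← hπadd, hc (x + y)] at this
        linear_combination -this
      calc B (π x) z = B (π x) (B w' z • v + B v z • w' + π z) := by rw [← hdecomp]
        _ = B w' z * B (π x) v + B v z * B (π x) w' + B (π x) (π z) := by
            simp only [map_add, map_smul, smul_eq_mul]; try ring
        _ = 0 := by
            rw [hsymm (π x) v, hsymm (π x) w', hBvπ, hBw'π, hBππ]; ring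
    -- identity factors through K², contradiction with dim 4
    have hfact : ∀ x : Fin 4 → K, x = B w' x • v + B v x • w' := by
      intro x
      have := hdecomp x
      rw [hπ0 x, add_zero] at this
      exact this
    set f : (Fin 4 → K) →ₗ[K] (Fin 2 → K) := LinearMap.pi ![B w', B v] with hf
    have hfinj : Function.Injective f := by
      have : Function.LeftInverse (fun c : Fin 2 → K => c 0 • v + c 1 • w') f := by
        intro x
        simp only [hf, LinearMap.pi_apply]
        rw [show ((![B w', B v] 0) x) = B w' x from rfl,
            show ((![B w', B v] 1) x) = B v x from rfl]
        exact (hfact x).symm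
      exact this.injective
    have := LinearMap.finrank_le_finrank_of_injective hfinj
    simp [Module.finrank_fin_fun] at this
  obtain ⟨x₀, hx₀⟩ := hex2
  set e₂ : Fin 4 → K := π x₀ with he₂
  set a : K := q e₂ with ha
  have ha0 : a ≠ 0 := hx₀
  have hBve₂ : B v e₂ = 0 := hBvπ x₀
  have hBw'e₂ : B w' e₂ = 0 := hBw'π x₀
  have hBe₂e₂ : B e₂ e₂ = 2 * a := by rw [hself]
  have h2a : 2 * a ≠ 0 := mul_ne_zero two_ne ha0
  -- second projection ρ
  set ρ : (Fin 4 → K) → (Fin 4 → K) := fun y => π y - ((2 * a)⁻¹ * B e₂ (π y)) • e₂ with hρ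
  have hρadd : ∀ x y, ρ (x + y) = ρ x + ρ y := by
    intro x y
    simp only [hρ, hπadd, map_add]
    module
  have hBvρ : ∀ y, B v (ρ y) = 0 := by
    intro y; simp [hρ, map_sub, map_smul, smul_eq_mul, hBvπ, hBve₂]
  have hBw'ρ : ∀ y, B w' (ρ y) = 0 := by
    intro y; simp [hρ, map_sub, map_smul, smul_eq_mul, hBw'π, hBw'e₂]
  have hBe₂ρ : ∀ y, B e₂ (ρ y) = 0 := by
    intro y
    simp only [hρ, map_sub, map_smul, smul_eq_mul, hBe₂e₂]
    field_simp; ring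
  have hBe₂π : ∀ x, B e₂ (π x) = B e₂ x := by
    intro x
    simp [hπ, map_sub, map_smul, smul_eq_mul, hsymm e₂ v, hsymm e₂ w', hBve₂, hBw'e₂]
  have hπdecomp : ∀ x, π x = ρ x + ((2 * a)⁻¹ * B e₂ (π x)) • e₂ := by
    intro x; simp only [hρ]; module
  -- find e₃
  have hex3 : ∃ y, q (ρ y) ≠ 0 := by
    by_contra hc
    push_neg at hc
    have hρ0 : ∀ y, ρ y = 0 := by
      intro y
      apply hnd.1
      intro z
      have hBρρ : ∀ x, B (ρ y) (ρ x) = 0 := by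
        intro x
        have := hadd (ρ y) (ρ x)
        rw [hc y, hc x, ← hρadd, hc (y + x)] at this
        linear_combination -this
      calc B (ρ y) z
          = B (ρ y) (B w' z • v + B v z • w' + (ρ z + ((2 * a)⁻¹ * B e₂ (π z)) • e₂)) := by
            rw [← hπdecomp, ← hdecomp]
        _ = B w' z * B (ρ y) v + B v z * B (ρ y) w' + B (ρ y) (ρ z)
              + ((2 * a)⁻¹ * B e₂ (π z)) * B (ρ y) e₂ := by
            simp only [map_add, map_smul, smul_eq_mul]; try ring
        _ = 0 := by
            rw [hsymm (ρ y) v, hsymm (ρ y) w', hsymm (ρ y) e₂,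
                hBvρ, hBw'ρ, hBe₂ρ, hBρρ]; ring
    have hfact : ∀ x : Fin 4 → K,
        x = B w' x • v + B v x • w' + ((2 * a)⁻¹ * B e₂ x) • e₂ := by
      intro x
      have h1 := hdecomp x
      rw [hπdecomp x, hρ0 x, zero_add, hBe₂π x] at h1
      exact h1
    set f : (Fin 4 → K) →ₗ[K] (Fin 3 → K) := LinearMap.pi ![B w', B v, B e₂] with hf
    have hfinj : Function.Injective f := by
      have : Function.LeftInverse
          (fun c : Fin 3 → K => c 0 • v + c 1 • w' + ((2 * a)⁻¹ * c 2) • e₂) f := by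
        intro x
        simp only [hf, LinearMap.pi_apply]
        rw [show ((![B w', B v, B e₂] 0) x) = B w' x from rfl,
            show ((![B w', B v, B e₂] 1) x) = B v x from rfl,
            show ((![B w', B v, B e₂] 2) x) = B e₂ x from rfl]
        exact (hfact x).symm
      exact this.injective
    have := LinearMap.finrank_le_finrank_of_injective hfinj
    simp [Module.finrank_fin_fun] at this
  obtain ⟨y₀, hy₀⟩ := hex3
  set e₃ : Fin 4 → K := ρ y₀ with he₃
  set b : K := q e₃ with hb
  have hb0 : b ≠ 0 := hy₀
  have hBve₃ : B v e₃ = 0 := hBvρ y₀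
  have hBw'e₃ : B w' e₃ = 0 := hBw'ρ y₀
  have hBe₂e₃ : B e₂ e₃ = 0 := hBe₂ρ y₀
  have he₃0 : e₃ ≠ 0 := by
    intro h
    apply hb0
    rw [hb, h, QuadraticMap.map_zero]
  -- the linear map
  set L : (Fin 4 → K) →ₗ[K] (Fin 4 → K) :=
    (LinearMap.proj 0).smulRight e₂ + (LinearMap.proj 1).smulRight v
      + (LinearMap.proj 2).smulRight ((-a) • w') + (LinearMap.proj 3).smulRight e₃ with hL
  have hLapp : ∀ x : Fin 4 → K,
      L x = x 0 • e₂ + x 1 • v + x 2 • ((-a) • w') + x 3 • e₃ := by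
    intro x
    simp [hL, LinearMap.smulRight_apply, LinearMap.proj_apply]
  have hker : ∀ x : Fin 4 → K, L x = 0 → x = 0 := by
    intro x hx
    rw [hLapp] at hx
    have h1 : x 1 = 0 := by
      have := congrArg (B w') hx
      simp only [map_add, map_smul, map_zero, smul_eq_mul, hBw'e₂, hBw'w',
        hsymm w' v, hBvw', hBw'e₃] at this
      linear_combination this
    have h2 : x 2 = 0 := by
      have := congrArg (B v) hx
      simp only [map_add, map_smul, map_zero, smul_eq_mul, hBve₂, hBvv, hBvw', hBve₃] at this
      have h' : x 2 * -a = 0 := by linear_combination this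
      rcases mul_eq_zero.mp h' with h | h
      · exact h
      · exact absurd (neg_eq_zero.mp h) ha0
    have h0 : x 0 = 0 := by
      have := congrArg (B e₂) hx
      simp only [map_add, map_smul, map_zero, smul_eq_mul, hBe₂e₂, hsymm e₂ v, hBve₂,
        hsymm e₂ w', hBw'e₂, hBe₂e₃] at this
      have h' : x 0 * (2 * a) = 0 := by linear_combination this
      rcases mul_eq_zero.mp h' with h | h
      · exact h
      · exact absurd h h2a
    rw [h0, h1, h2] at hx
    simp only [zero_smul, zero_add, add_zero] at hx
    have h3 : x 3 = 0 := by
      rcases smul_eq_zero.mp hx with h | h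
      · exact h
      · exact absurd h he₃0
    funext i
    fin_cases i <;> simp [h0, h1, h2, h3]
  have hinj : Function.Injective L := by
    intro x y hxy
    have := hker (x - y) (by rw [map_sub, hxy, sub_self])
    exact sub_eq_zero.mp this
  have hsurj : Function.Surjective L := (LinearMap.injective_iff_surjective).mp hinj
  set e : (Fin 4 → K) ≃ₗ[K] (Fin 4 → K) := LinearEquiv.ofBijective L ⟨hinj, hsurj⟩ with he
  refine ⟨Units.mk0 a ha0, Units.mk0 (-(b * a⁻¹)) (by simp [hb0, ha0]), e, ?_⟩
  intro x
  have hexp : ∀ m0 m1 m2 m3 : Fin 4 → K,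
      q (m0 + m1 + m2 + m3) = q m0 + q m1 + q m2 + q m3
        + B m0 m1 + B m0 m2 + B m0 m3 + B m1 m2 + B m1 m3 + B m2 m3 := by
    intro m0 m1 m2 m3
    rw [hadd (m0 + m1 + m2) m3, hadd (m0 + m1) m2, hadd m0 m1]
    simp only [map_add, LinearMap.add_apply]
    ring
  have heL : (e x : Fin 4 → K) = x 0 • e₂ + x 1 • v + x 2 • ((-a) • w') + x 3 • e₃ := by
    rw [he]
    exact hLapp x
  rw [heL, hexp]
  rw [hqsmul, hqsmul, hqsmul, hqsmul, hqsmul, hqv, hqw', ← ha, ← hb]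
  simp only [map_smul, smul_eq_mul, LinearMap.smul_apply,
    hBvv, hBvw', hBw'w', hBve₂, hBw'e₂, hBe₂e₂, hBe₂e₃, hBve₃, hBw'e₃,
    hsymm e₂ v, hsymm e₂ w']
  field_simp
  simp only [Units.val_mk0]
  linear_combination (-(x 3 ^ 2 * b)) * mul_inv_cancel₀ ha0
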